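/- Fix a real constant c > 0, and for each n let p_n be the uniform probability mass function on the set {0, 1, …, ⌈cn⌉ − 1} ⊆ ℕ (so p_n(u) = 1/⌈cn⌉ for u < ⌈cn⌉ and 0 otherwise). Then n·R_n(M^GT, p_n) → (1/c + 1)·e^{−1/c} − e^{−2/c} as n → ∞. -/

import Mathlib

open scoped BigOperators

noncomputable section

/-- `p` is a probability mass function on `ℕ`. -/
def IsPMF (p : ℕ → ℝ) : Prop := (∀ u, 0 ≤ p u) ∧ HasSum p 1

/-- `N_u(X^n)`: the number of appearances of the symbol `u` in the sample `x`. -/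
def nOcc {n : ℕ} (x : Fin n → ℕ) (u : ℕ) : ℕ :=
  (Finset.univ.filter fun i => x i = u).card

/-- Probability of the sample `x` under the `n`-fold product measure `p^⊗n`. -/
def sampleProb {n : ℕ} (p : ℕ → ℝ) (x : Fin n → ℕ) : ℝ := ∏ i, p (x i)

/-- Expectation of `f(X^n)` for `X^n ∼ p^⊗n`. -/
def expct (n : ℕ) (p : ℕ → ℝ) (f : (Fin n → ℕ) → ℝ) : ℝ :=
  ∑' x : Fin n → ℕ, sampleProb p x * f x

/-- The missing mass `M₀(X^n) = ∑_u p(u) 𝟙[N_u(X^n) = 0]`. -/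
def missingMass {n : ℕ} (p : ℕ → ℝ) (x : Fin n → ℕ) : ℝ :=
  ∑' u : ℕ, if nOcc x u = 0 then p u else 0

/-- `Φ_i(X^n)`: the number of symbols appearing exactly `i` times in `x` (for `i ≥ 1`). -/
def phi {n : ℕ} (i : ℕ) (x : Fin n → ℕ) : ℕ :=
  ((Finset.univ.image x).filter fun u => nOcc x u = i).card

/-- The Good-Turing estimator `M^GT(X^n) = Φ₁(X^n)/n`. -/
def goodTuring {n : ℕ} (x : Fin n → ℕ) : ℝ := (phi 1 x : ℝ) / n

/-- The squared-error risk `R_n(M̂, p) = E[(M̂(X^n) - M₀(X^n))²]`. -/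
def risk (n : ℕ) (p : ℕ → ℝ) (M : (Fin n → ℕ) → ℝ) : ℝ :=
  expct n p fun x => (M x - missingMass p x) ^ 2

/-- The worst-case risk of the Good-Turing estimator, `sup_p R_n(M^GT, p)`. -/
def gtWorstRisk (n : ℕ) : ℝ :=
  sSup {r : ℝ | ∃ p : ℕ → ℝ, IsPMF p ∧ r = risk n p goodTuring}

/-- The uniform pmf on `{0, 1, …, m-1} ⊆ ℕ`. -/
def uniformPMF (m : ℕ) : ℕ → ℝ := fun u => if u < m then 1 / (m : ℝ) else 0

open Finset

variable {n m : ℕ}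

def emb {n m : ℕ} (y : Fin n → Fin m) : Fin n → ℕ := fun i => (y i : ℕ)

lemma nOcc_emb (y : Fin n → Fin m) (w : Fin m) :
    nOcc (emb y) (w : ℕ) = (univ.filter fun i => y i = w).card := by
  unfold nOcc emb
  congr 1
  ext i
  simp [Fin.val_eq_val]

lemma card_coord (t : Fin n → Finset (Fin m)) :
    (univ.filter fun y : Fin n → Fin m => ∀ i, y i ∈ t i).card = ∏ i, (t i).card := by
  have h : univ.filter (fun y : Fin n → Fin m => ∀ i, y i ∈ t i) = Fintype.piFinset t := by
    ext y; simp [Fintype.mem_piFinset]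
  rw [h, Fintype.card_piFinset]

lemma prod_one_special (i : Fin n) (a b : ℕ) :
    (∏ j : Fin n, if j = i then a else b) = a * b ^ (n - 1) := by
  rw [← Finset.mul_prod_erase univ _ (mem_univ i), if_pos rfl]
  congr 1
  rw [Finset.prod_congr rfl (fun j hj => if_neg (Finset.ne_of_mem_erase hj)),
    Finset.prod_const, Finset.card_erase_of_mem (mem_univ i), card_univ, Fintype.card_fin]

lemma prod_two_special (i j : Fin n) (hij : j ≠ i) (a b c : ℕ) :
    (∏ k : Fin n, if k = i then a else if k = j then b else c) = a * b * c ^ (n - 2) := by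
  rw [← Finset.mul_prod_erase univ _ (mem_univ i), if_pos rfl]
  have hj : j ∈ univ.erase i := by simp [hij]
  rw [← Finset.mul_prod_erase _ _ hj, if_neg hij, if_pos rfl, ← mul_assoc]
  congr 1
  have : ∀ k ∈ (univ.erase i).erase j, (if k = i then a else if k = j then b else c) = c := by
    intro k hk
    rw [if_neg (Finset.ne_of_mem_erase (Finset.mem_of_mem_erase hk)),
      if_neg (Finset.ne_of_mem_erase hk)]
  rw [Finset.prod_congr rfl this, Finset.prod_const,
    Finset.card_erase_of_mem hj, Finset.card_erase_of_mem (mem_univ i), card_univ,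
    Fintype.card_fin, Nat.sub_sub]

lemma nOcc_emb_zero_iff (y : Fin n → Fin m) (w : Fin m) :
    nOcc (emb y) w = 0 ↔ ∀ i, y i ≠ w := by
  rw [nOcc_emb, Finset.card_eq_zero, Finset.filter_eq_empty_iff]
  simp

lemma nOcc_emb_one_iff (y : Fin n → Fin m) (w : Fin m) :
    nOcc (emb y) w = 1 ↔ ∃ i, y i = w ∧ ∀ j, j ≠ i → y j ≠ w := by
  rw [nOcc_emb, Finset.card_eq_one]
  constructor
  · rintro ⟨i, hi⟩
    refine ⟨i, ?_, ?_⟩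
    · have : i ∈ univ.filter fun i => y i = w := hi ▸ Finset.mem_singleton_self i
      simpa using this
    · intro j hj hyj
      have : j ∈ univ.filter fun i => y i = w := by simpa using hyj
      rw [hi, Finset.mem_singleton] at this
      exact hj this
  · rintro ⟨i, hi, hother⟩
    refine ⟨i, ?_⟩
    ext j
    simp only [Finset.mem_filter, Finset.mem_univ, true_and, Finset.mem_singleton]
    constructor
    · intro hj; by_contra hne; exact hother j hne hj
    · rintro rfl; exact hi

-- m-1 etc as card
lemma card_erase_one (w : Fin m) : (univ.erase w).card = m - 1 := by
  rw [Finset.card_erase_of_mem (mem_univ w), card_univ, Fintype.card_fin]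

lemma card_erase_two {w w' : Fin m} (h : w ≠ w') : ((univ.erase w).erase w').card = m - 2 := by
  have hw' : w' ∈ univ.erase w := by simp [Ne.symm h]
  rw [Finset.card_erase_of_mem hw', card_erase_one]
  omega

-- C0
lemma count_C0 (w : Fin m) :
    (univ.filter fun y : Fin n → Fin m => nOcc (emb y) w = 0).card = (m - 1) ^ n := by
  have h : (univ.filter fun y : Fin n → Fin m => nOcc (emb y) w = 0)
      = univ.filter fun y => ∀ i, y i ∈ univ.erase w := by
    apply Finset.filter_congr
    intro y _
    rw [nOcc_emb_zero_iff]
    simp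
  rw [h, card_coord]
  simp [card_erase_one]

-- C00
lemma count_C00 {w w' : Fin m} (hww : w ≠ w') :
    (univ.filter fun y : Fin n → Fin m => nOcc (emb y) w = 0 ∧ nOcc (emb y) w' = 0).card
      = (m - 2) ^ n := by
  have h : (univ.filter fun y : Fin n → Fin m => nOcc (emb y) w = 0 ∧ nOcc (emb y) w' = 0)
      = univ.filter fun y => ∀ i, y i ∈ (univ.erase w).erase w' := by
    apply Finset.filter_congr
    intro y _
    rw [nOcc_emb_zero_iff, nOcc_emb_zero_iff]
    constructor
    · rintro ⟨h1, h2⟩ i; simp [h1 i, h2 i]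
    · intro h
      refine ⟨fun i => ?_, fun i => ?_⟩ <;>
        · have := h i; simp only [Finset.mem_erase, Finset.mem_univ, and_true] at this; tauto
  rw [h, card_coord, Finset.prod_const, card_erase_two hww, card_univ, Fintype.card_fin]
-- C1
lemma count_C1 (w : Fin m) :
    (univ.filter fun y : Fin n → Fin m => nOcc (emb y) w = 1).card
      = n * (m - 1) ^ (n - 1) := by
  classical
  have hset : (univ.filter fun y : Fin n → Fin m => nOcc (emb y) w = 1)
      = univ.biUnion (fun i : Fin n =>
          univ.filter fun y : Fin n → Fin m =>
            ∀ j, y j ∈ (if j = i then ({w} : Finset (Fin m)) else univ.erase w)) := by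
    ext y
    simp only [Finset.mem_filter, Finset.mem_biUnion, Finset.mem_univ, true_and]
    rw [nOcc_emb_one_iff]
    constructor
    · rintro ⟨i, hi, hother⟩
      refine ⟨i, fun j => ?_⟩
      by_cases hj : j = i
      · subst hj; simp [hi]
      · simp [hj, hother j hj]
    · rintro ⟨i, hi⟩
      refine ⟨i, ?_, fun j hj => ?_⟩
      · have := hi i; simpa using this
      · have := hi j; simp [hj] at this; exact this
  rw [hset, Finset.card_biUnion]
  · have : ∀ i : Fin n,
        (univ.filter fun y : Fin n → Fin m =>
          ∀ j, y j ∈ (if j = i then ({w} : Finset (Fin m)) else univ.erase w)).card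
        = (m - 1) ^ (n - 1) := by
      intro i
      rw [card_coord]
      have : ∀ j : Fin n,
          ((if j = i then ({w} : Finset (Fin m)) else univ.erase w)).card
          = if j = i then 1 else m - 1 := by
        intro j; split <;> simp [card_erase_one]
      rw [Finset.prod_congr rfl (fun j _ => this j), prod_one_special, one_mul]
    rw [Finset.sum_congr rfl (fun i _ => this i), Finset.sum_const, card_univ,
      Fintype.card_fin, smul_eq_mul]
  · intro i _ i' _ hii
    rw [Function.onFun, Finset.disjoint_left]
    intro y hy hy'
    simp only [Finset.mem_filter, Finset.mem_univ, true_and] at hy hy'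
    have h1 := hy i; have h2 := hy' i
    rw [if_pos rfl] at h1
    rw [if_neg hii] at h2
    simp at h1 h2
    exact h2 h1

-- C10 : nOcc w = 1 and nOcc w' = 0
lemma count_C10 {w w' : Fin m} (hww : w ≠ w') :
    (univ.filter fun y : Fin n → Fin m => nOcc (emb y) w = 1 ∧ nOcc (emb y) w' = 0).card
      = n * (m - 2) ^ (n - 1) := by
  classical
  have hset : (univ.filter fun y : Fin n → Fin m =>
        nOcc (emb y) w = 1 ∧ nOcc (emb y) w' = 0)
      = univ.biUnion (fun i : Fin n =>
          univ.filter fun y : Fin n → Fin m =>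
            ∀ j, y j ∈ (if j = i then ({w} : Finset (Fin m))
              else (univ.erase w).erase w')) := by
    ext y
    simp only [Finset.mem_filter, Finset.mem_biUnion, Finset.mem_univ, true_and]
    rw [nOcc_emb_one_iff, nOcc_emb_zero_iff]
    constructor
    · rintro ⟨⟨i, hi, hother⟩, h0⟩
      refine ⟨i, fun j => ?_⟩
      by_cases hj : j = i
      · subst hj; simp [hi]
      · simp [hj, hother j hj, h0 j]
    · rintro ⟨i, hi⟩
      refine ⟨⟨i, ?_, fun j hj => ?_⟩, fun j => ?_⟩
      · have := hi i; simpa using this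
      · have := hi j; simp [hj] at this; tauto
      · have := hi j
        by_cases hj : j = i
        · subst hj; simp at this; simp [this, hww]
        · simp [hj] at this; tauto
  rw [hset, Finset.card_biUnion]
  · have : ∀ i : Fin n,
        (univ.filter fun y : Fin n → Fin m =>
          ∀ j, y j ∈ (if j = i then ({w} : Finset (Fin m)) else (univ.erase w).erase w')).card
        = (m - 2) ^ (n - 1) := by
      intro i
      rw [card_coord]
      have : ∀ j : Fin n,
          ((if j = i then ({w} : Finset (Fin m)) else (univ.erase w).erase w')).card
          = if j = i then 1 else m - 2 := by
        intro j; split <;> simp [card_erase_two hww]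
      rw [Finset.prod_congr rfl (fun j _ => this j), prod_one_special, one_mul]
    rw [Finset.sum_congr rfl (fun i _ => this i), Finset.sum_const, card_univ,
      Fintype.card_fin, smul_eq_mul]
  · intro i _ i' _ hii
    rw [Function.onFun, Finset.disjoint_left]
    intro y hy hy'
    simp only [Finset.mem_filter, Finset.mem_univ, true_and] at hy hy'
    have h1 := hy i; have h2 := hy' i
    rw [if_pos rfl] at h1
    rw [if_neg hii] at h2
    simp at h1 h2
    exact h2.2 h1

-- C11
lemma count_C11 {w w' : Fin m} (hww : w ≠ w') :
    (univ.filter fun y : Fin n → Fin m => nOcc (emb y) w = 1 ∧ nOcc (emb y) w' = 1).card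
      = n * (n - 1) * (m - 2) ^ (n - 2) := by
  classical
  have hset : (univ.filter fun y : Fin n → Fin m =>
        nOcc (emb y) w = 1 ∧ nOcc (emb y) w' = 1)
      = (univ : Finset (Fin n)).offDiag.biUnion (fun p =>
          univ.filter fun y : Fin n → Fin m =>
            ∀ k, y k ∈ (if k = p.1 then ({w} : Finset (Fin m))
              else if k = p.2 then ({w'} : Finset (Fin m))
              else (univ.erase w).erase w')) := by
    ext y
    simp only [Finset.mem_filter, Finset.mem_biUnion, Finset.mem_univ, true_and,
      Finset.mem_offDiag]
    rw [nOcc_emb_one_iff, nOcc_emb_one_iff]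
    constructor
    · rintro ⟨⟨i, hi, hother⟩, ⟨j, hj, hother'⟩⟩
      have hij : i ≠ j := by
        rintro rfl; rw [hi] at hj; exact hww hj
      refine ⟨(i, j), by simpa using hij, fun k => ?_⟩
      by_cases hki : k = i
      · subst hki; simp [hi]
      · by_cases hkj : k = j
        · subst hkj; simp [hki, hj]
        · simp [hki, hkj, hother k hki, hother' k hkj]
    · rintro ⟨⟨i, j⟩, hij', hy⟩
      have hij : i ≠ j := by simpa using hij'
      have hyi : y i = w := by have := hy i; simpa using this
      have hyj : y j = w' := by
        have := hy j; rw [if_neg (Ne.symm hij), if_pos rfl] at this; simpa using this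
      refine ⟨⟨i, hyi, fun k hk => ?_⟩, ⟨j, hyj, fun k hk => ?_⟩⟩
      · have := hy k
        by_cases hkj : k = j
        · subst hkj; rw [hyj]; exact Ne.symm hww
        · rw [if_neg hk, if_neg hkj] at this; simp at this; tauto
      · have := hy k
        by_cases hki : k = i
        · subst hki; rw [hyi]; exact hww
        · rw [if_neg hki, if_neg hk] at this; simp at this; tauto
  rw [hset, Finset.card_biUnion]
  · have hpc : ∀ p ∈ (univ : Finset (Fin n)).offDiag,
        (univ.filter fun y : Fin n → Fin m =>
          ∀ k, y k ∈ (if k = p.1 then ({w} : Finset (Fin m))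
            else if k = p.2 then ({w'} : Finset (Fin m))
            else (univ.erase w).erase w')).card
        = (m - 2) ^ (n - 2) := by
      rintro ⟨i, j⟩ hp
      simp only [Finset.mem_offDiag] at hp
      rw [card_coord]
      have : ∀ k : Fin n,
          (if k = i then ({w} : Finset (Fin m))
            else if k = j then ({w'} : Finset (Fin m))
            else (univ.erase w).erase w').card
          = if k = i then 1 else if k = j then 1 else m - 2 := by
        intro k; split
        · simp
        · split <;> simp [card_erase_two hww]
      rw [Finset.prod_congr rfl (fun k _ => this k),
        prod_two_special i j (Ne.symm hp.2.2), one_mul, one_mul]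
    rw [Finset.sum_congr rfl hpc, Finset.sum_const, Finset.offDiag_card, card_univ,
      Fintype.card_fin, smul_eq_mul]
    congr 1
    cases n <;> simp [Nat.succ_sub_one] <;> ring_nf <;> omega
  · rintro ⟨i, j⟩ hp ⟨i', j'⟩ hp' hne
    simp only [Finset.mem_coe, Finset.mem_offDiag] at hp hp'
    rw [Function.onFun, Finset.disjoint_left]
    intro y hy hy'
    simp only [Finset.mem_filter, Finset.mem_univ, true_and] at hy hy'
    have hyi : y i = w := by have := hy i; simpa using this
    have hyj : y j = w' := by
      have := hy j; rw [if_neg (Ne.symm hp.2.2), if_pos rfl] at this; simpa using this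
    have hii : i = i' := by
      by_contra hne2
      have := hy' i
      rw [if_neg hne2] at this
      by_cases hij' : i = j'
      · rw [if_pos hij'] at this; simp at this; rw [hyi] at this; exact hww this
      · rw [if_neg hij'] at this; simp at this; exact this.2 hyi
    have hjj : j = j' := by
      by_contra hne2
      have := hy' j
      rw [if_neg (by rw [← hii]; exact Ne.symm hp.2.2)] at this
      rw [if_neg hne2] at this
      simp at this
      exact this.1 hyj
    exact hne (by rw [hii, hjj])
-- needs defs uniformPMF, sampleProb, expct, missingMass, phi, goodTuring from main file
lemma emb_injective : Function.Injective (emb : (Fin n → Fin m) → (Fin n → ℕ)) := by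
  intro y y' h
  funext i
  have : (y i : ℕ) = (y' i : ℕ) := congrFun h i
  exact Fin.val_injective this

lemma expct_uniform (hm : 0 < m) (f : (Fin n → ℕ) → ℝ) :
    expct n (uniformPMF m) f = ∑ y : Fin n → Fin m, (1 / (m : ℝ)) ^ n * f (emb y) := by
  classical
  rw [expct]
  have hs : ∀ x : (Fin n → ℕ), x ∉ Finset.univ.image (emb : (Fin n → Fin m) → _) →
      sampleProb (uniformPMF m) x * f x = 0 := by
    intro x hx
    have : ∃ i, ¬ x i < m := by
      by_contra hc
      push_neg at hc
      exact hx (Finset.mem_image.mpr ⟨fun i => ⟨x i, hc i⟩, Finset.mem_univ _, rfl⟩)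
    obtain ⟨i, hi⟩ := this
    have : sampleProb (uniformPMF m) x = 0 := by
      apply Finset.prod_eq_zero (Finset.mem_univ i)
      simp [uniformPMF, hi]
    rw [this, zero_mul]
  rw [tsum_eq_sum hs, Finset.sum_image (fun a _ b _ h => emb_injective h)]
  apply Finset.sum_congr rfl
  intro y _
  congr 1
  rw [sampleProb]
  have : ∀ i : Fin n, uniformPMF m (emb y i) = 1 / (m : ℝ) := by
    intro i
    simp [uniformPMF, emb, (y i).isLt]
  rw [Finset.prod_congr rfl (fun i _ => this i), Finset.prod_const, card_univ, Fintype.card_fin]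

lemma missingMass_emb (y : Fin n → Fin m) :
    missingMass (uniformPMF m) (emb y)
      = ∑ w : Fin m, (if nOcc (emb y) w = 0 then (1 / (m : ℝ)) else 0) := by
  classical
  rw [missingMass]
  have hs : ∀ u : ℕ, u ∉ Finset.range m →
      (if nOcc (emb y) u = 0 then uniformPMF m u else 0) = 0 := by
    intro u hu
    rw [Finset.mem_range, not_lt] at hu
    have : uniformPMF m u = 0 := by simp [uniformPMF]; omega
    rw [this, ite_self]
  rw [tsum_eq_sum hs, Fin.sum_univ_eq_sum_range
    (fun u => if nOcc (emb y) u = 0 then (1 / (m : ℝ)) else 0) m]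
  apply Finset.sum_congr rfl
  intro u hu
  rw [Finset.mem_range] at hu
  simp [uniformPMF, hu]

lemma phi_emb (y : Fin n → Fin m) :
    (phi 1 (emb y) : ℝ) = ∑ w : Fin m, (if nOcc (emb y) w = 1 then (1 : ℝ) else 0) := by
  classical
  rw [phi]
  have h : ((Finset.univ.image (emb y)).filter fun u => nOcc (emb y) u = 1)
      = (Finset.range m).filter fun u => nOcc (emb y) u = 1 := by
    ext u
    simp only [Finset.mem_filter, Finset.mem_image, Finset.mem_univ, true_and,
      Finset.mem_range]
    constructor
    · rintro ⟨⟨i, rfl⟩, h1⟩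
      exact ⟨(y i).isLt, h1⟩
    · rintro ⟨hu, h1⟩
      refine ⟨?_, h1⟩
      have : (Finset.univ.filter fun i => emb y i = u).card = 1 := h1
      have hne : (Finset.univ.filter fun i => emb y i = u).Nonempty := by
        rw [← Finset.card_pos, this]; norm_num
      obtain ⟨i, hi⟩ := hne
      simp only [Finset.mem_filter] at hi
      exact ⟨i, hi.2⟩
  rw [h, Finset.card_filter, Fin.sum_univ_eq_sum_range
    (fun u => if nOcc (emb y) u = 1 then (1 : ℝ) else 0) m]
  push_cast
  rfl
def gfun (n m : ℕ) (w : Fin m) (y : Fin n → Fin m) : ℝ :=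
  (if nOcc (emb y) ↑w = 1 then (1 / (n : ℝ)) else 0)
    - (if nOcc (emb y) ↑w = 0 then (1 / (m : ℝ)) else 0)

lemma diff_eq (y : Fin n → Fin m) :
    goodTuring (emb y) - missingMass (uniformPMF m) (emb y) = ∑ w : Fin m, gfun n m w y := by
  rw [goodTuring, phi_emb, missingMass_emb, Finset.sum_div, ← Finset.sum_sub_distrib]
  apply Finset.sum_congr rfl
  intro w _
  rw [gfun]
  congr 1
  split <;> simp

lemma sum_ite_card (P : (Fin n → Fin m) → Prop) [DecidablePred P] (cst : ℝ) :
    ∑ y : Fin n → Fin m, (if P y then cst else 0)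
      = cst * ((univ.filter P).card : ℝ) := by
  rw [← Finset.sum_filter, Finset.sum_const, nsmul_eq_mul, mul_comm]

lemma sum_g_sq (w : Fin m) :
    ∑ y : Fin n → Fin m, gfun n m w y * gfun n m w y
      = (1 / (n : ℝ))^2 * ((n * (m - 1) ^ (n - 1) : ℕ) : ℝ)
        + (1 / (m : ℝ))^2 * (((m - 1) ^ n : ℕ) : ℝ) := by
  classical
  have hpt : ∀ y : Fin n → Fin m, gfun n m w y * gfun n m w y
      = (if nOcc (emb y) ↑w = 1 then (1 / (n : ℝ))^2 else 0)
        + (if nOcc (emb y) ↑w = 0 then (1 / (m : ℝ))^2 else 0) := by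
    intro y
    by_cases h1 : nOcc (emb y) ↑w = 1 <;> by_cases h0 : nOcc (emb y) ↑w = 0
    · omega
    · simp [gfun, h1, h0]; ring
    · simp [gfun, h1, h0]; ring
    · simp [gfun, h1, h0]
  rw [Finset.sum_congr rfl (fun y _ => hpt y), Finset.sum_add_distrib,
    sum_ite_card, sum_ite_card, count_C1, count_C0]

lemma sum_g_offdiag {w w' : Fin m} (hww : w ≠ w') :
    ∑ y : Fin n → Fin m, gfun n m w y * gfun n m w' y
      = (1 / (n : ℝ))^2 * ((n * (n - 1) * (m - 2) ^ (n - 2) : ℕ) : ℝ)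
        - 2 * (1 / ((n : ℝ) * m)) * ((n * (m - 2) ^ (n - 1) : ℕ) : ℝ)
        + (1 / (m : ℝ))^2 * (((m - 2) ^ n : ℕ) : ℝ) := by
  classical
  have hpt : ∀ y : Fin n → Fin m, gfun n m w y * gfun n m w' y
      = (if nOcc (emb y) ↑w = 1 ∧ nOcc (emb y) ↑w' = 1 then (1 / (n : ℝ))^2 else 0)
        - (if nOcc (emb y) ↑w = 1 ∧ nOcc (emb y) ↑w' = 0 then 1 / ((n : ℝ) * m) else 0)
        - (if nOcc (emb y) ↑w = 0 ∧ nOcc (emb y) ↑w' = 1 then 1 / ((n : ℝ) * m) else 0)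
        + (if nOcc (emb y) ↑w = 0 ∧ nOcc (emb y) ↑w' = 0 then (1 / (m : ℝ))^2 else 0) := by
    intro y
    by_cases ha : nOcc (emb y) ↑w = 1 <;> by_cases hb : nOcc (emb y) ↑w = 0 <;>
      by_cases hc : nOcc (emb y) ↑w' = 1 <;> by_cases hd : nOcc (emb y) ↑w' = 0 <;>
      first
      | omega
      | (simp [gfun, ha, hb, hc, hd]; ring)
      | simp [gfun, ha, hb, hc, hd]
  rw [Finset.sum_congr rfl (fun y _ => hpt y)]
  rw [Finset.sum_add_distrib, Finset.sum_sub_distrib, Finset.sum_sub_distrib,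
    sum_ite_card, sum_ite_card, sum_ite_card, sum_ite_card,
    count_C11 hww, count_C10 hww, count_C00 hww]
  have hswap : (univ.filter fun y : Fin n → Fin m =>
        nOcc (emb y) ↑w = 0 ∧ nOcc (emb y) ↑w' = 1)
      = univ.filter fun y : Fin n → Fin m =>
        nOcc (emb y) ↑w' = 1 ∧ nOcc (emb y) ↑w = 0 := by
    apply Finset.filter_congr; intro y _; exact and_comm
  rw [hswap, count_C10 (Ne.symm hww)]
  ring

lemma nrisk_formula (hn : 2 ≤ n) (hm : 2 ≤ m) :
    (n : ℝ) * risk n (uniformPMF m) goodTuring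
      = (1 - 1/(m:ℝ))^(n-1) + ((n:ℝ)/(m:ℝ)) * (1 - 1/(m:ℝ))^n
        + (((m:ℝ)-1)/(m:ℝ)) * (1 - 2/(m:ℝ))^(n-2) * (4*(n:ℝ)/(m:ℝ)^2 - 1) := by
  classical
  obtain ⟨k, rfl⟩ : ∃ k, n = k + 2 := ⟨n - 2, by omega⟩
  have hm0 : (m:ℝ) ≠ 0 := Nat.cast_ne_zero.mpr (by omega)
  rw [show risk (k+2) (uniformPMF m) goodTuring
      = expct (k+2) (uniformPMF m)
        (fun x => (goodTuring x - missingMass (uniformPMF m) x) ^ 2) from rfl,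
    expct_uniform (by omega : 0 < m), ← Finset.mul_sum]
  have h2 : ∀ y : Fin (k+2) → Fin m,
      (goodTuring (emb y) - missingMass (uniformPMF m) (emb y)) ^ 2
        = ∑ w : Fin m, ∑ w' : Fin m, gfun (k+2) m w y * gfun (k+2) m w' y := by
    intro y
    rw [diff_eq, sq, Finset.sum_mul_sum]
  rw [Finset.sum_congr rfl (fun y _ => h2 y), Finset.sum_comm]
  rw [Finset.sum_congr rfl (fun (w : Fin m) _ =>
    Finset.sum_comm (γ := Fin (k+2) → Fin m))]
  have e1 : k + 2 - 1 = k + 1 := by omega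
  have e2 : k + 2 - 2 = k := by omega
  have hinner : ∀ w : Fin m,
      (∑ w' : Fin m, ∑ y : Fin (k+2) → Fin m, gfun (k+2) m w y * gfun (k+2) m w' y)
      = ((1 / ((k+2 : ℕ) : ℝ))^2 * (((k+2) * (m - 1) ^ (k+1) : ℕ) : ℝ)
          + (1 / (m : ℝ))^2 * (((m - 1) ^ (k+2) : ℕ) : ℝ))
        + ((m - 1 : ℕ) : ℝ) *
          ((1 / ((k+2 : ℕ) : ℝ))^2 * (((k+2) * ((k+2) - 1) * (m - 2) ^ k : ℕ) : ℝ)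
            - 2 * (1 / (((k+2 : ℕ) : ℝ) * m)) * (((k+2) * (m - 2) ^ (k+1) : ℕ) : ℝ)
            + (1 / (m : ℝ))^2 * (((m - 2) ^ (k+2) : ℕ) : ℝ)) := by
    intro w
    rw [← Finset.add_sum_erase _ _ (mem_univ w)]
    congr 1
    · rw [sum_g_sq w, e1]
    · rw [Finset.sum_congr rfl
        (fun w' hw' => sum_g_offdiag (Finset.ne_of_mem_erase hw').symm),
        Finset.sum_const, card_erase_one, nsmul_eq_mul, e1, e2]
  rw [Finset.sum_congr rfl (fun w _ => hinner w), Finset.sum_const, card_univ,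
    Fintype.card_fin, nsmul_eq_mul, e1, e2]
  have c1 : ((m-1:ℕ):ℝ) = (m:ℝ) - 1 := by
    rw [Nat.cast_sub (by omega)]; norm_num
  have c2 : ((m-2:ℕ):ℝ) = (m:ℝ) - 2 := by
    rw [Nat.cast_sub (by omega)]; norm_num
  push_cast [c1, c2]
  have hb1 : (1:ℝ) - 1/(m:ℝ) = ((m:ℝ)-1)/(m:ℝ) := by field_simp
  have hb2 : (1:ℝ) - 2/(m:ℝ) = ((m:ℝ)-2)/(m:ℝ) := by field_simp
  rw [hb1, hb2]
  simp only [div_pow, pow_succ]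
  have hk2 : (k:ℝ) + 2 ≠ 0 := by positivity
  field_simp
  ring
open Filter Real Topology

lemma tendsto_ceil_atTop' {c : ℝ} (hc : 0 < c) :
    Tendsto (fun n : ℕ => ((⌈c * (n:ℝ)⌉₊ : ℕ) : ℝ)) atTop atTop := by
  apply tendsto_atTop_mono (fun n : ℕ => Nat.le_ceil (c * (n:ℝ)))
  exact (tendsto_natCast_atTop_atTop).const_mul_atTop hc

lemma tendsto_inv_ceil {c : ℝ} (hc : 0 < c) :
    Tendsto (fun n : ℕ => (((⌈c * (n:ℝ)⌉₊ : ℕ) : ℝ))⁻¹) atTop (𝓝 0) :=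
  tendsto_inv_atTop_zero.comp (tendsto_ceil_atTop' hc)

lemma tendsto_ratio {c : ℝ} (hc : 0 < c) :
    Tendsto (fun n : ℕ => (n:ℝ) / ((⌈c * (n:ℝ)⌉₊ : ℕ) : ℝ)) atTop (𝓝 (1/c)) := by
  have hup : Tendsto (fun n : ℕ => c + 1/(n:ℝ)) atTop (𝓝 c) := by
    have h := tendsto_one_div_atTop_nhds_zero_nat (𝕜 := ℝ)
    have h2 := (tendsto_const_nhds (x := c) (f := (atTop : Filter ℕ))).add h
    simpa using h2
  have hM : Tendsto (fun n : ℕ => ((⌈c * (n:ℝ)⌉₊ : ℕ) : ℝ) / (n:ℝ)) atTop (𝓝 c) := by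
    apply tendsto_of_tendsto_of_tendsto_of_le_of_le' tendsto_const_nhds hup
    · filter_upwards [eventually_ge_atTop 1] with n hn
      have hn0 : (0:ℝ) < (n:ℝ) := by exact_mod_cast hn
      rw [le_div_iff₀ hn0]
      exact Nat.le_ceil _
    · filter_upwards [eventually_ge_atTop 1] with n hn
      have hn0 : (0:ℝ) < (n:ℝ) := by exact_mod_cast hn
      rw [div_le_iff₀ hn0]
      have h1 : ((⌈c * (n:ℝ)⌉₊ : ℕ) : ℝ) < c * n + 1 :=
        Nat.ceil_lt_add_one (by positivity)
      have h2 : (c + 1/(n:ℝ)) * n = c * n + 1 := by field_simp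
      linarith
  have := hM.inv₀ (ne_of_gt hc)
  rw [one_div]
  apply this.congr
  intro n
  rw [inv_div]

lemma tendsto_slope_log :
    Tendsto (fun t : ℝ => t⁻¹ * Real.log (1 - t)) (𝓝[≠] (0:ℝ)) (𝓝 (-1)) := by
  have h1 : HasDerivAt (fun t : ℝ => 1 - t) (-1) 0 := by
    simpa using (hasDerivAt_id (0:ℝ)).const_sub 1
  have h2 : HasDerivAt (fun t : ℝ => Real.log (1 - t)) (-1) 0 := by
    have := (Real.hasDerivAt_log (by norm_num : (1:ℝ) - 0 ≠ 0)).comp 0 h1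
    have e : ((1:ℝ) - 0)⁻¹ * -1 = -1 := by norm_num
    rw [e] at this
    exact this
  have h3 := hasDerivAt_iff_tendsto_slope.mp h2
  apply h3.congr
  intro t
  simp [slope, Real.log_one]

lemma tendsto_pow_ceil {c : ℝ} (hc : 0 < c) (k : ℝ) (hk : 0 < k) (j : ℕ) :
    Tendsto (fun n : ℕ => (1 - k / ((⌈c * (n:ℝ)⌉₊ : ℕ) : ℝ)) ^ (n - j)) atTop
      (𝓝 (Real.exp (-(k/c)))) := by
  set M : ℕ → ℝ := fun n => ((⌈c * (n:ℝ)⌉₊ : ℕ) : ℝ) with hM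
  have hMpos : ∀ᶠ n : ℕ in atTop, (1:ℝ) ≤ M n :=
    (tendsto_ceil_atTop' hc).eventually_ge_atTop 1
  have ht0 : Tendsto (fun n => k / M n) atTop (𝓝 0) := by
    have := (tendsto_inv_ceil hc).const_mul k
    rw [mul_zero] at this
    apply this.congr
    intro n
    rw [div_eq_mul_inv]
  have htne : ∀ᶠ n : ℕ in atTop, k / M n ≠ 0 := by
    filter_upwards [hMpos] with n hn
    have : (0:ℝ) < M n := lt_of_lt_of_le one_pos hn
    positivity
  have htw : Tendsto (fun n => k / M n) atTop (𝓝[≠] (0:ℝ)) :=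
    tendsto_nhdsWithin_iff.mpr ⟨ht0, htne⟩
  have hlog1 : Tendsto (fun n => (k / M n)⁻¹ * Real.log (1 - k / M n)) atTop (𝓝 (-1)) :=
    tendsto_slope_log.comp htw
  have hnt : Tendsto (fun n : ℕ => (n:ℝ) * (k / M n)) atTop (𝓝 (k/c)) := by
    have := (tendsto_ratio hc).const_mul k
    rw [mul_one_div] at this
    apply this.congr
    intro n
    rw [hM]
    ring
  have hmain : Tendsto (fun n : ℕ => (n:ℝ) * Real.log (1 - k / M n)) atTop (𝓝 (-(k/c))) := by
    have h := hnt.mul hlog1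
    rw [mul_neg_one] at h
    apply h.congr' _
    filter_upwards [htne] with n hn
    have hMn : M n ≠ 0 := by intro h0; apply hn; simp [h0]
    field_simp
  have hlog0 : Tendsto (fun n : ℕ => Real.log (1 - k / M n)) atTop (𝓝 0) := by
    have hcont : ContinuousAt (fun x : ℝ => Real.log (1 - x)) 0 :=
      (Real.continuousAt_log (by norm_num)).comp
        ((continuous_const.sub continuous_id).continuousAt)
    have := hcont.tendsto.comp ht0
    simpa [Function.comp_def] using this
  have hexp_arg : Tendsto (fun n : ℕ => ((n - j : ℕ) : ℝ) * Real.log (1 - k / M n)) atTop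
      (𝓝 (-(k/c))) := by
    have h := hmain.sub (hlog0.const_mul (j:ℝ))
    rw [mul_zero, sub_zero] at h
    apply h.congr' _
    filter_upwards [eventually_ge_atTop j] with n hn
    rw [Nat.cast_sub hn]
    ring
  have hfinal := (Real.continuous_exp.tendsto _).comp hexp_arg
  apply hfinal.congr' _
  filter_upwards [(tendsto_ceil_atTop' hc).eventually_ge_atTop (k + 1)] with n hn
  have hb : (0:ℝ) < 1 - k / M n := by
    have hMp : (0:ℝ) < M n := by
      have : (0:ℝ) < k + 1 := by positivity
      exact lt_of_lt_of_le this hn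
    rw [sub_pos, div_lt_one hMp]
    linarith
  simp only [Function.comp]
  rw [Real.exp_nat_mul, Real.exp_log hb]

/-- **Risk of the Good-Turing estimator for uniform distributions** (equation (14)).
Fix `c > 0` and let `p_n` be uniform on `⌈cn⌉` symbols. Then
`n · R_n(M^GT, p_n) → (1/c + 1) e^{-1/c} - e^{-2/c}` as `n → ∞`. -/
theorem goodTuring_risk_uniform_limit (c : ℝ) (hc : 0 < c) :
    Filter.Tendsto
      (fun n : ℕ => (n : ℝ) * risk n (uniformPMF ⌈c * (n : ℝ)⌉₊) goodTuring)
      Filter.atTop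
      (nhds ((1 / c + 1) * Real.exp (-1 / c) - Real.exp (-2 / c))) := by
  have hT1 := tendsto_pow_ceil hc 1 one_pos 1
  have hT2pow : Tendsto
      (fun n : ℕ => (1 - 1 / ((⌈c*(n:ℝ)⌉₊ : ℕ):ℝ))^n) atTop (𝓝 (Real.exp (-(1/c)))) := by
    simpa using tendsto_pow_ceil hc 1 one_pos 0
  have hT2 := (tendsto_ratio hc).mul hT2pow
  have hT3a : Tendsto (fun n : ℕ => (((⌈c*(n:ℝ)⌉₊:ℕ):ℝ) - 1)/((⌈c*(n:ℝ)⌉₊:ℕ):ℝ))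
      atTop (𝓝 1) := by
    have h := (tendsto_const_nhds (x := (1:ℝ)) (f := (atTop : Filter ℕ))).sub
      (tendsto_inv_ceil hc)
    rw [sub_zero] at h
    apply h.congr' _
    filter_upwards [(tendsto_ceil_atTop' hc).eventually_ge_atTop 1] with n hn
    have hne : ((⌈c*(n:ℝ)⌉₊:ℕ):ℝ) ≠ 0 := by linarith
    field_simp
  have hT3b := tendsto_pow_ceil hc 2 two_pos 2
  have hT3c : Tendsto (fun n : ℕ => 4*(n:ℝ)/((⌈c*(n:ℝ)⌉₊:ℕ):ℝ)^2 - 1) atTop (𝓝 (-1)) := by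
    have h := ((tendsto_ratio hc).const_mul 4).mul (tendsto_inv_ceil hc)
    rw [mul_zero] at h
    have h2 := h.sub (tendsto_const_nhds (x := (1:ℝ)))
    rw [zero_sub] at h2
    apply h2.congr
    intro n
    ring
  have hsum := (hT1.add hT2).add ((hT3a.mul hT3b).mul hT3c)
  have hval : Real.exp (-(1/c)) + 1/c * Real.exp (-(1/c)) + 1 * Real.exp (-(2/c)) * (-1)
      = (1 / c + 1) * Real.exp (-1 / c) - Real.exp (-2 / c) := by
    rw [show (-1:ℝ)/c = -(1/c) by ring, show (-2:ℝ)/c = -(2/c) by ring]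
    ring
  rw [← hval]
  apply hsum.congr' _
  filter_upwards [eventually_ge_atTop 2, (tendsto_ceil_atTop' hc).eventually_ge_atTop 2]
    with n hn2 hm2
  have hm2' : 2 ≤ ⌈c*(n:ℝ)⌉₊ := by exact_mod_cast hm2
  rw [nrisk_formula hn2 hm2']
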